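/- Subject reduction for the cross reduction of λ_CL: if (C[ā u]) ∥_a D : A is well-typed with ā : ¬B, a : B, where y₁:Y₁,...,yₖ:Yₖ are the free variables of u bound in C[ā u], B' = Y₁ ∧ ... ∧ Yₖ, and b is a fresh variable with b̄ : ¬B', b : B', then the term (C[b̄ ⟨y₁,...,yₖ⟩] ∥_a D) ∥_b D[u^{b/ȳ}/a] has type A, where u^{b/ȳ} replaces each yᵢ in u by the i-th projection of b. -/

import Mathlib

/-- Propositional formulas: atoms, ⊥, implication, conjunction. -/
inductive Formula : Type where
  | atom : Nat → Formula
  | bot  : Formula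
  | imp  : Formula → Formula → Formula
  | conj : Formula → Formula → Formula
deriving DecidableEq

/-- A formula is prime if it is not a conjunction. -/
def Formula.IsPrime : Formula → Prop
  | .conj _ _ => False
  | _ => True

/-- Atomic formulas (atoms and ⊥). -/
def Formula.IsAtomic : Formula → Prop
  | .atom _ => True
  | .bot => True
  | _ => False

/-- Subformula relation. -/
inductive Subformula : Formula → Formula → Prop where
  | refl (A : Formula) : Subformula A A
  | impL : Subformula A B → Subformula A (Formula.imp B C)
  | impR : Subformula A C → Subformula A (Formula.imp B C)
  | conjL : Subformula A B → Subformula A (Formula.conj B C)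
  | conjR : Subformula A C → Subformula A (Formula.conj B C)

/-- Proper subformula: subformula and not equal. -/
def ProperSub (A B : Formula) : Prop := Subformula A B ∧ A ≠ B

/-- B is a strong subformula of A: a proper subformula of some prime
proper subformula of A. -/
def StrongSub (B A : Formula) : Prop :=
  ∃ P, Formula.IsPrime P ∧ ProperSub P A ∧ ProperSub B P

/-- `ConjList A l` : A is the conjunction of the (nonempty) list of formulas l. -/
inductive ConjList : Formula → List Formula → Prop where
  | single (A : Formula) : ConjList A [A]
  | conj : ConjList A l → ConjList B m → ConjList (Formula.conj A B) (l ++ m)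

/-- P is a prime factor of A: A is a conjunction of prime formulas among which P. -/
def PrimeFactor (P A : Formula) : Prop :=
  ∃ l, ConjList A l ∧ (∀ Q ∈ l, Formula.IsPrime Q) ∧ P ∈ l

/-- Number of symbols of a formula. -/
def Formula.size : Formula → Nat
  | .atom _ => 1
  | .bot => 1
  | .imp A B => A.size + B.size + 1
  | .conj A B => A.size + B.size + 1

/-- The canonical list of prime factors of a formula. -/
def primeFactors : Formula → List Formula
  | .conj A B => primeFactors A ++ primeFactors B
  | A => [A]
/-- λ_CL terms (de Bruijn): simply typed λ-terms plus the parallel operators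
`parC A u v` (u ∥ₐ v with communication kind A, binding channel variable 0,
of type ¬A in u and A in v) and `par u v` (u ∥ v). -/
inductive TermCL : Type where
  | var : Nat → TermCL
  | lam : Formula → TermCL → TermCL
  | app : TermCL → TermCL → TermCL
  | pair : TermCL → TermCL → TermCL
  | proj : Bool → TermCL → TermCL
  | efq : Formula → TermCL → TermCL
  | parC : Formula → TermCL → TermCL → TermCL
  | par : TermCL → TermCL → TermCL
deriving DecidableEq

def liftF (f : Nat → Nat) : Nat → Nat
  | 0 => 0
  | n+1 => f n + 1

def TermCL.rename (f : Nat → Nat) : TermCL → TermCL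
  | .var n => .var (f n)
  | .lam A t => .lam A (t.rename (liftF f))
  | .app t u => .app (t.rename f) (u.rename f)
  | .pair t u => .pair (t.rename f) (u.rename f)
  | .proj b t => .proj b (t.rename f)
  | .efq A t => .efq A (t.rename f)
  | .parC A u v => .parC A (u.rename (liftF f)) (v.rename (liftF f))
  | .par u v => .par (u.rename f) (v.rename f)

/-- Shift all free variables up by one. -/
def liftT : TermCL → TermCL := TermCL.rename Nat.succ
/-- Shift all free variables except 0 up by one. -/
def liftU1 : TermCL → TermCL := TermCL.rename (liftF Nat.succ)
/-- Swap the variables 0 and 1. -/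
def swap01 : TermCL → TermCL :=
  TermCL.rename (fun n => match n with | 0 => 1 | 1 => 0 | m => m)

/-- Substitution of `s` for variable `k` (variables above `k` shift down). -/
def TermCL.subst (k : Nat) (s : TermCL) : TermCL → TermCL
  | .var n => if n = k then s else if k < n then .var (n-1) else .var n
  | .lam A t => .lam A (TermCL.subst (k+1) (s.rename Nat.succ) t)
  | .app t u => .app (TermCL.subst k s t) (TermCL.subst k s u)
  | .pair t u => .pair (TermCL.subst k s t) (TermCL.subst k s u)
  | .proj b t => .proj b (TermCL.subst k s t)
  | .efq A t => .efq A (TermCL.subst k s t)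
  | .parC A u v => .parC A (TermCL.subst (k+1) (s.rename Nat.succ) u)
      (TermCL.subst (k+1) (s.rename Nat.succ) v)
  | .par u v => .par (TermCL.subst k s u) (TermCL.subst k s v)

def liftσ (σ : Nat → TermCL) : Nat → TermCL
  | 0 => .var 0
  | n+1 => (σ n).rename Nat.succ

/-- Simultaneous substitution. -/
def TermCL.msubst (σ : Nat → TermCL) : TermCL → TermCL
  | .var n => σ n
  | .lam A t => .lam A (TermCL.msubst (liftσ σ) t)
  | .app t u => .app (TermCL.msubst σ t) (TermCL.msubst σ u)
  | .pair t u => .pair (TermCL.msubst σ t) (TermCL.msubst σ u)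
  | .proj b t => .proj b (TermCL.msubst σ t)
  | .efq A t => .efq A (TermCL.msubst σ t)
  | .parC A u v => .parC A (TermCL.msubst (liftσ σ) u) (TermCL.msubst (liftσ σ) v)
  | .par u v => .par (TermCL.msubst σ u) (TermCL.msubst σ v)

/-- `freeInB n t = true` iff variable `n` occurs free in `t`. -/
def freeInB (n : Nat) : TermCL → Bool
  | .var m => m == n
  | .lam _ t => freeInB (n+1) t
  | .app t u => freeInB n t || freeInB n u
  | .pair t u => freeInB n t || freeInB n u
  | .proj _ t => freeInB n t
  | .efq _ t => freeInB n t
  | .parC _ u v => freeInB (n+1) u || freeInB (n+1) v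
  | .par u v => freeInB n u || freeInB n v

/-- Typing for λ_CL: intuitionistic rules, the excluded-middle rule (parC)
and contraction (par). -/
inductive TypingCL : List Formula → TermCL → Formula → Prop where
  | var : Γ[n]? = some A → TypingCL Γ (.var n) A
  | lam : TypingCL (A::Γ) t B → TypingCL Γ (.lam A t) (.imp A B)
  | app : TypingCL Γ t (.imp A B) → TypingCL Γ u A → TypingCL Γ (.app t u) B
  | pair : TypingCL Γ t A → TypingCL Γ u B → TypingCL Γ (.pair t u) (.conj A B)
  | projL : TypingCL Γ t (.conj A B) → TypingCL Γ (.proj false t) A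
  | projR : TypingCL Γ t (.conj A B) → TypingCL Γ (.proj true t) B
  | efq : P.IsAtomic → P ≠ .bot → TypingCL Γ t .bot → TypingCL Γ (.efq P t) P
  | parC : TypingCL (.imp A .bot :: Γ) u C → TypingCL (A :: Γ) v C →
      TypingCL Γ (.parC A u v) C
  | par : TypingCL Γ u A → TypingCL Γ v A → TypingCL Γ (.par u v) A

/-- Terms without parallel operators, i.e. simply typed λ-terms. -/
def NoPar : TermCL → Prop
  | .var _ => True
  | .lam _ t => NoPar t
  | .app t u => NoPar t ∧ NoPar u
  | .pair t u => NoPar t ∧ NoPar u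
  | .proj _ t => NoPar t
  | .efq _ t => NoPar t
  | .parC _ _ _ => False
  | .par _ _ => False

/-- Simple parallel terms: parallel compositions (by ∥) of simply typed λ-terms. -/
inductive SimpleParallel : TermCL → Prop where
  | base : NoPar t → SimpleParallel t
  | par : SimpleParallel u → SimpleParallel v → SimpleParallel (.par u v)

/-- Parallel forms: parallel compositions (by ∥ₐ and ∥) of simply typed λ-terms. -/
inductive ParallelForm : TermCL → Prop where
  | base : NoPar t → ParallelForm t
  | parC : ParallelForm u → ParallelForm v → ParallelForm (.parC A u v)
  | par : ParallelForm u → ParallelForm v → ParallelForm (.par u v)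

/-- One-hole contexts. -/
inductive Ctx : Type where
  | hole : Ctx
  | lam : Formula → Ctx → Ctx
  | appL : Ctx → TermCL → Ctx
  | appR : TermCL → Ctx → Ctx
  | pairL : Ctx → TermCL → Ctx
  | pairR : TermCL → Ctx → Ctx
  | proj : Bool → Ctx → Ctx
  | efq : Formula → Ctx → Ctx
  | parCL : Formula → Ctx → TermCL → Ctx
  | parCR : Formula → TermCL → Ctx → Ctx
  | parL : Ctx → TermCL → Ctx
  | parR : TermCL → Ctx → Ctx

def Ctx.fill : Ctx → TermCL → TermCL
  | .hole, t => t
  | .lam A c, t => .lam A (c.fill t)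
  | .appL c u, t => .app (c.fill t) u
  | .appR u c, t => .app u (c.fill t)
  | .pairL c u, t => .pair (c.fill t) u
  | .pairR u c, t => .pair u (c.fill t)
  | .proj b c, t => .proj b (c.fill t)
  | .efq A c, t => .efq A (c.fill t)
  | .parCL A c u, t => .parC A (c.fill t) u
  | .parCR A u c, t => .parC A u (c.fill t)
  | .parL c u, t => .par (c.fill t) u
  | .parR u c, t => .par u (c.fill t)

/-- Types of the binders crossed by the hole, innermost first. -/
def Ctx.ext : Ctx → List Formula
  | .hole => []
  | .lam A c => c.ext ++ [A]
  | .appL c _ => c.ext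
  | .appR _ c => c.ext
  | .pairL c _ => c.ext
  | .pairR _ c => c.ext
  | .proj _ c => c.ext
  | .efq _ c => c.ext
  | .parCL A c _ => c.ext ++ [Formula.imp A .bot]
  | .parCR A _ c => c.ext ++ [A]
  | .parL c _ => c.ext
  | .parR _ c => c.ext

/-- Number of binders above the hole. -/
def Ctx.depth (c : Ctx) : Nat := c.ext.length

def Ctx.rename (f : Nat → Nat) : Ctx → Ctx
  | .hole => .hole
  | .lam A c => .lam A (c.rename (liftF f))
  | .appL c u => .appL (c.rename f) (u.rename f)
  | .appR u c => .appR (u.rename f) (c.rename f)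
  | .pairL c u => .pairL (c.rename f) (u.rename f)
  | .pairR u c => .pairR (u.rename f) (c.rename f)
  | .proj b c => .proj b (c.rename f)
  | .efq A c => .efq A (c.rename f)
  | .parCL A c u => .parCL A (c.rename (liftF f)) (u.rename (liftF f))
  | .parCR A u c => .parCR A (u.rename (liftF f)) (c.rename (liftF f))
  | .parL c u => .parL (c.rename f) (u.rename f)
  | .parR u c => .parR (u.rename f) (c.rename f)

/-- The variable `a` does not occur (free) to the right of the hole. -/
def NoVarRight (a : Nat) : Ctx → Prop
  | .hole => True
  | .lam _ c => NoVarRight (a+1) c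
  | .appL c t => NoVarRight a c ∧ freeInB a t = false
  | .appR _ c => NoVarRight a c
  | .pairL c t => NoVarRight a c ∧ freeInB a t = false
  | .pairR _ c => NoVarRight a c
  | .proj _ c => NoVarRight a c
  | .efq _ c => NoVarRight a c
  | .parCL _ c t => NoVarRight (a+1) c ∧ freeInB (a+1) t = false
  | .parCR _ _ c => NoVarRight (a+1) c
  | .parL c t => NoVarRight a c ∧ freeInB a t = false
  | .parR _ c => NoVarRight a c

open Classical in
/-- Communication complexity: total number of symbols of the prime factors of
the communication kind `B` that are neither proper subformulas of the term's
type `A` nor strong subformulas of the types `fvs` of its free variables. -/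
noncomputable def commComplexity (fvs : List Formula) (A B : Formula) : Nat :=
  ((primeFactors B).filter fun P =>
      decide (¬ (ProperSub P A ∨ ∃ Ai ∈ fvs, StrongSub P Ai))).foldr
    (fun P n => P.size + n) 0

/-- The types of the free variables of `t` in context `Γ`. -/
def freeTypes (Γ : List Formula) (t : TermCL) : List Formula :=
  (List.range Γ.length).filterMap fun n => if freeInB n t then Γ[n]? else none

/-- Iterated pairs ⟨t₁,...,tₙ⟩. -/
def tupleTerm : List TermCL → TermCL
  | [] => .var 0
  | [t] => t
  | t :: l => .pair t (tupleTerm l)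

/-- Iterated conjunctions Y₁ ∧ (Y₂ ∧ ... ∧ Yₙ). -/
def tupleType : List Formula → Formula
  | [] => .bot
  | [A] => A
  | A :: l => .conj A (tupleType l)

/-- The i-th projection of a tuple of length `len`. -/
def projSel (i len : Nat) (t : TermCL) : TermCL :=
  if i + 1 = len then (TermCL.proj true)^[i] t
  else .proj false ((TermCL.proj true)^[i] t)

/-- The multiple substitution `u^{b/ȳ}` (with `b` the channel variable 0):
variables in `ys` (the free variables of `u` bound in the context, all < k)
are replaced by the corresponding projections of `b`, the remaining free
variables (≥ k+1, the variable k being the channel ā, absent) are readdressed. -/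
def crossσ (k : Nat) (ys : List Nat) : Nat → TermCL := fun n =>
  if n < k then projSel (List.idxOf n ys) ys.length (.var 0)
  else .var (n - k)

/-- Intuitionistic (β/projection) reduction on λ_CL terms. -/
inductive RedI : TermCL → TermCL → Prop where
  | beta : RedI (.app (.lam A t) u) (TermCL.subst 0 u t)
  | projL : RedI (.proj false (.pair t u)) t
  | projR : RedI (.proj true (.pair t u)) u
  | lam : RedI t t' → RedI (.lam A t) (.lam A t')
  | appL : RedI t t' → RedI (.app t u) (.app t' u)
  | appR : RedI u u' → RedI (.app t u) (.app t u')
  | pairL : RedI t t' → RedI (.pair t u) (.pair t' u)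
  | pairR : RedI u u' → RedI (.pair t u) (.pair t u')
  | proj : RedI t t' → RedI (.proj b t) (.proj b t')
  | efq : RedI t t' → RedI (.efq A t) (.efq A t')
  | parCL : RedI u u' → RedI (.parC A u v) (.parC A u' v)
  | parCR : RedI v v' → RedI (.parC A u v) (.parC A u v')
  | parL : RedI u u' → RedI (.par u v) (.par u' v)
  | parR : RedI v v' → RedI (.par u v) (.par u v')

/-- Normality with respect to intuitionistic reductions. -/
def IntuNormal (t : TermCL) : Prop := ∀ u, ¬ RedI t u
section Aux

/-- Renaming preserves typing. -/
theorem rename_typing {Γ : List Formula} {t : TermCL} {A : Formula}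
    (ht : TypingCL Γ t A) :
    ∀ {Δ : List Formula} {f : Nat → Nat},
      (∀ n X, Γ[n]? = some X → Δ[f n]? = some X) →
      TypingCL Δ (t.rename f) A := by
  induction ht with
  | var h => intro Δ f hf; exact .var (hf _ _ h)
  | lam h ih =>
    intro Δ f hf
    refine .lam (ih ?_)
    intro n X hx
    cases n with
    | zero => simpa [liftF] using hx
    | succ n => simpa [liftF] using hf n X (by simpa using hx)
  | app h1 h2 ih1 ih2 => intro Δ f hf; exact .app (ih1 hf) (ih2 hf)
  | pair h1 h2 ih1 ih2 => intro Δ f hf; exact .pair (ih1 hf) (ih2 hf)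
  | projL h ih => intro Δ f hf; exact .projL (ih hf)
  | projR h ih => intro Δ f hf; exact .projR (ih hf)
  | efq h1 h2 h ih => intro Δ f hf; exact .efq h1 h2 (ih hf)
  | parC h1 h2 ih1 ih2 =>
    intro Δ f hf
    refine .parC (ih1 ?_) (ih2 ?_) <;>
    · intro n X hx
      cases n with
      | zero => simpa [liftF] using hx
      | succ n => simpa [liftF] using hf n X (by simpa using hx)
  | par h1 h2 ih1 ih2 => intro Δ f hf; exact .par (ih1 hf) (ih2 hf)

theorem liftσ_ok {Γ Δ : List Formula} {σ : Nat → TermCL} {Q : Nat → Bool} {A : Formula}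
    (hσ : ∀ n X, Q (n+1) = true → Γ[n]? = some X → TypingCL Δ (σ n) X) :
    ∀ n X, Q n = true → (A::Γ)[n]? = some X → TypingCL (A::Δ) (liftσ σ n) X := by
  intro n X hq hx
  cases n with
  | zero =>
    simp at hx
    subst hx
    exact .var (by simp)
  | succ n =>
    simp only [liftσ]
    refine rename_typing (hσ n X hq (by simpa using hx)) ?_
    intro m Y hy
    simpa using hy

/-- Simultaneous substitution preserves typing (only free variables matter). -/
theorem msubst_typing {Γ : List Formula} {t : TermCL} {A : Formula}
    (ht : TypingCL Γ t A) :
    ∀ {Δ : List Formula} {σ : Nat → TermCL},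
      (∀ n X, freeInB n t = true → Γ[n]? = some X → TypingCL Δ (σ n) X) →
      TypingCL Δ (t.msubst σ) A := by
  induction ht with
  | var h =>
    intro Δ σ hσ
    exact hσ _ _ (by simp [freeInB]) h
  | lam h ih =>
    intro Δ σ hσ
    exact .lam (ih (liftσ_ok (fun n X hq hx => hσ n X (by simpa [freeInB] using hq) hx)))
  | app h1 h2 ih1 ih2 =>
    intro Δ σ hσ
    exact .app (ih1 fun n X hq hx => hσ n X (by simp [freeInB, hq]) hx)
      (ih2 fun n X hq hx => hσ n X (by simp [freeInB, hq]) hx)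
  | pair h1 h2 ih1 ih2 =>
    intro Δ σ hσ
    exact .pair (ih1 fun n X hq hx => hσ n X (by simp [freeInB, hq]) hx)
      (ih2 fun n X hq hx => hσ n X (by simp [freeInB, hq]) hx)
  | projL h ih =>
    intro Δ σ hσ
    exact .projL (ih fun n X hq hx => hσ n X (by simpa [freeInB] using hq) hx)
  | projR h ih =>
    intro Δ σ hσ
    exact .projR (ih fun n X hq hx => hσ n X (by simpa [freeInB] using hq) hx)
  | efq h1 h2 h ih =>
    intro Δ σ hσ
    exact .efq h1 h2 (ih fun n X hq hx => hσ n X (by simpa [freeInB] using hq) hx)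
  | parC h1 h2 ih1 ih2 =>
    intro Δ σ hσ
    exact .parC
      (ih1 (liftσ_ok (fun n X hq hx => hσ n X (by simp [freeInB, hq]) hx)))
      (ih2 (liftσ_ok (fun n X hq hx => hσ n X (by simp [freeInB, hq]) hx)))
  | par h1 h2 ih1 ih2 =>
    intro Δ σ hσ
    exact .par (ih1 fun n X hq hx => hσ n X (by simp [freeInB, hq]) hx)
      (ih2 fun n X hq hx => hσ n X (by simp [freeInB, hq]) hx)

/-- The substitution `subst k s` as a simultaneous substitution. -/
def substσ (k : Nat) (s : TermCL) : Nat → TermCL := fun n =>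
  if n = k then s else if k < n then .var (n-1) else .var n

theorem liftσ_substσ (k : Nat) (s : TermCL) :
    liftσ (substσ k s) = substσ (k+1) (s.rename Nat.succ) := by
  funext n
  cases n with
  | zero => simp [liftσ, substσ]
  | succ n =>
    simp only [liftσ, substσ]
    by_cases h : n = k
    · simp [h]
    · by_cases h2 : k < n
      · have : ¬ (n + 1 = k + 1) := by omega
        have h3 : k + 1 < n + 1 := by omega
        have h4 : 1 ≤ n := by omega
        simp [h, h2, this, h3, TermCL.rename, Nat.sub_add_cancel h4]
      · have : ¬ (n + 1 = k + 1) := by omega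
        have h3 : ¬ (k + 1 < n + 1) := by omega
        simp [h, h2, this, h3, TermCL.rename]

theorem subst_eq_msubst (t : TermCL) : ∀ (k : Nat) (s : TermCL),
    TermCL.subst k s t = t.msubst (substσ k s) := by
  induction t with
  | var n => intro k s; simp [TermCL.subst, TermCL.msubst, substσ]
  | lam A t ih => intro k s; simp [TermCL.subst, TermCL.msubst, ih, liftσ_substσ]
  | app t u iht ihu => intro k s; simp [TermCL.subst, TermCL.msubst, iht, ihu]
  | pair t u iht ihu => intro k s; simp [TermCL.subst, TermCL.msubst, iht, ihu]
  | proj b t ih => intro k s; simp [TermCL.subst, TermCL.msubst, ih]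
  | efq A t ih => intro k s; simp [TermCL.subst, TermCL.msubst, ih]
  | parC A u v ihu ihv =>
    intro k s; simp [TermCL.subst, TermCL.msubst, ihu, ihv, liftσ_substσ]
  | par u v ihu ihv => intro k s; simp [TermCL.subst, TermCL.msubst, ihu, ihv]

theorem subst0_typing {Γ : List Formula} {t s : TermCL} {A X : Formula}
    (ht : TypingCL (X :: Γ) t A) (hs : TypingCL Γ s X) :
    TypingCL Γ (TermCL.subst 0 s t) A := by
  rw [subst_eq_msubst]
  refine msubst_typing ht ?_
  intro n Y _ hy
  cases n with
  | zero =>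
    simp at hy
    subst hy
    simpa [substσ] using hs
  | succ n =>
    simp only [substσ]
    have : ¬ (n + 1 = 0) := by omega
    simp only [this, if_false, if_pos (Nat.zero_lt_succ n)]
    exact .var (by simpa using hy)

/-- Typing inversion for contexts. -/
theorem fill_inv : ∀ (C : Ctx) {Γ : List Formula} {t : TermCL} {A : Formula},
    TypingCL Γ (C.fill t) A → ∃ T, TypingCL (C.ext ++ Γ) t T := by
  intro C
  induction C with
  | hole => intro Γ t A h; exact ⟨A, h⟩
  | lam X c ih =>
    intro Γ t A h
    cases h with
    | lam h =>
      obtain ⟨T, hT⟩ := ih h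
      exact ⟨T, by simpa [Ctx.ext, List.append_assoc] using hT⟩
  | appL c u ih =>
    intro Γ t A h
    cases h with | app h1 h2 => exact ih h1
  | appR u c ih =>
    intro Γ t A h
    cases h with | app h1 h2 => exact ih h2
  | pairL c u ih =>
    intro Γ t A h
    cases h with | pair h1 h2 => exact ih h1
  | pairR u c ih =>
    intro Γ t A h
    cases h with | pair h1 h2 => exact ih h2
  | proj b c ih =>
    intro Γ t A h
    cases h with
    | projL h => exact ih h
    | projR h => exact ih h
  | efq X c ih =>
    intro Γ t A h
    cases h with | efq _ _ h => exact ih h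
  | parCL X c u ih =>
    intro Γ t A h
    cases h with
    | parC h1 h2 =>
      obtain ⟨T, hT⟩ := ih h1
      exact ⟨T, by simpa [Ctx.ext, List.append_assoc] using hT⟩
  | parCR X u c ih =>
    intro Γ t A h
    cases h with
    | parC h1 h2 =>
      obtain ⟨T, hT⟩ := ih h2
      exact ⟨T, by simpa [Ctx.ext, List.append_assoc] using hT⟩
  | parL c u ih =>
    intro Γ t A h
    cases h with | par h1 h2 => exact ih h1
  | parR u c ih =>
    intro Γ t A h
    cases h with | par h1 h2 => exact ih h2

/-- Replacement of the hole content, with a renaming of the context. -/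
theorem fill_typing : ∀ (C : Ctx) {Γ Δ : List Formula} {f : Nat → Nat}
    {t t' : TermCL} {A : Formula},
    TypingCL Γ (C.fill t) A →
    (∀ n X, Γ[n]? = some X → Δ[f n]? = some X) →
    (∀ T, TypingCL (C.ext ++ Γ) t T → TypingCL (C.ext ++ Δ) t' T) →
    TypingCL Δ ((C.rename f).fill t') A := by
  intro C
  induction C with
  | hole =>
    intro Γ Δ f t t' A h hf hrep
    exact hrep A h
  | lam X c ih =>
    intro Γ Δ f t t' A h hf hrep
    cases h with
    | lam h =>
      refine .lam (ih h ?_ ?_)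
      · intro n Y hy
        cases n with
        | zero => simpa [liftF] using hy
        | succ n => simpa [liftF] using hf n Y (by simpa using hy)
      · intro T hT
        have := hrep T (by simpa [Ctx.ext, List.append_assoc] using hT)
        simpa [Ctx.ext, List.append_assoc] using this
  | appL c u ih =>
    intro Γ Δ f t t' A h hf hrep
    cases h with
    | app h1 h2 => exact .app (ih h1 hf hrep) (rename_typing h2 hf)
  | appR u c ih =>
    intro Γ Δ f t t' A h hf hrep
    cases h with
    | app h1 h2 => exact .app (rename_typing h1 hf) (ih h2 hf hrep)
  | pairL c u ih =>
    intro Γ Δ f t t' A h hf hrep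
    cases h with
    | pair h1 h2 => exact .pair (ih h1 hf hrep) (rename_typing h2 hf)
  | pairR u c ih =>
    intro Γ Δ f t t' A h hf hrep
    cases h with
    | pair h1 h2 => exact .pair (rename_typing h1 hf) (ih h2 hf hrep)
  | proj b c ih =>
    intro Γ Δ f t t' A h hf hrep
    cases h with
    | projL h => exact .projL (ih h hf hrep)
    | projR h => exact .projR (ih h hf hrep)
  | efq X c ih =>
    intro Γ Δ f t t' A h hf hrep
    cases h with
    | efq h1 h2 h => exact .efq h1 h2 (ih h hf hrep)
  | parCL X c u ih =>
    intro Γ Δ f t t' A h hf hrep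
    cases h with
    | parC h1 h2 =>
      refine .parC (ih h1 ?_ ?_) (rename_typing h2 ?_)
      · intro n Y hy
        cases n with
        | zero => simpa [liftF] using hy
        | succ n => simpa [liftF] using hf n Y (by simpa using hy)
      · intro T hT
        have := hrep T (by simpa [Ctx.ext, List.append_assoc] using hT)
        simpa [Ctx.ext, List.append_assoc] using this
      · intro n Y hy
        cases n with
        | zero => simpa [liftF] using hy
        | succ n => simpa [liftF] using hf n Y (by simpa using hy)
  | parCR X u c ih =>
    intro Γ Δ f t t' A h hf hrep
    cases h with
    | parC h1 h2 =>
      refine .parC (rename_typing h1 ?_) (ih h2 ?_ ?_)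
      · intro n Y hy
        cases n with
        | zero => simpa [liftF] using hy
        | succ n => simpa [liftF] using hf n Y (by simpa using hy)
      · intro n Y hy
        cases n with
        | zero => simpa [liftF] using hy
        | succ n => simpa [liftF] using hf n Y (by simpa using hy)
      · intro T hT
        have := hrep T (by simpa [Ctx.ext, List.append_assoc] using hT)
        simpa [Ctx.ext, List.append_assoc] using this
  | parL c u ih =>
    intro Γ Δ f t t' A h hf hrep
    cases h with
    | par h1 h2 => exact .par (ih h1 hf hrep) (rename_typing h2 hf)
  | parR u c ih =>
    intro Γ Δ f t t' A h hf hrep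
    cases h with
    | par h1 h2 => exact .par (rename_typing h1 hf) (ih h2 hf hrep)

/-- Typing of tuples of variables. -/
theorem tuple_typing (g : Nat → Formula) : ∀ (l : List Nat), l ≠ [] →
    ∀ {Γ : List Formula}, (∀ n ∈ l, Γ[n]? = some (g n)) →
    TypingCL Γ (tupleTerm (l.map TermCL.var)) (tupleType (l.map g)) := by
  intro l
  induction l with
  | nil => intro h; exact absurd rfl h
  | cons a m ih =>
    intro _ Γ hΓ
    cases m with
    | nil =>
      simpa [tupleTerm, tupleType] using TypingCL.var (hΓ a (by simp))
    | cons b m' =>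
      have h1 : TypingCL Γ (TermCL.var a) (g a) := .var (hΓ a (by simp))
      have h2 := ih (by simp) (fun n hn => hΓ n (by simp [hn]))
      exact .pair h1 h2

/-- Typing of projections from tuples. -/
theorem projSel_typing : ∀ (l : List Formula) (i : Nat) (hi : i < l.length)
    {Γ : List Formula} {t : TermCL},
    TypingCL Γ t (tupleType l) → TypingCL Γ (projSel i l.length t) l[i] := by
  intro l
  induction l with
  | nil => intro i hi; simp at hi
  | cons a m ih =>
    intro i hi Γ t ht
    cases m with
    | nil =>
      have h0 : i = 0 := Nat.lt_one_iff.mp (by simpa using hi)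
      subst h0
      simpa [projSel, tupleType] using ht
    | cons b m' =>
      have htc : TypingCL Γ t (.conj a (tupleType (b :: m'))) := by
        simpa [tupleType] using ht
      cases i with
      | zero =>
        have hne : ¬ (0 + 1 = (a :: b :: m').length) := by simp
        simpa [projSel, hne] using TypingCL.projL htc
      | succ j =>
        have hj : j < (b :: m').length := by simpa using hi
        have hrec : projSel (j+1) (a :: b :: m').length t
            = projSel j (b :: m').length (.proj true t) := by
          simp only [projSel, List.length_cons, Function.iterate_succ_apply]
          have : (j + 1 + 1 = m'.length + 1 + 1) ↔ (j + 1 = m'.length + 1) := by omega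
          by_cases hc : j + 1 = m'.length + 1
          · simp [hc]
          · have hc2 : ¬ (j + 1 + 1 = m'.length + 1 + 1) := by omega
            simp [hc, hc2]
        rw [hrec]
        have := ih j hj (TypingCL.projR htc)
        simpa using this

end Aux

/-- subject reduction for the cross reduction
C[ā u] ∥ₐ D ↦ (C[b̄⟨ȳ⟩] ∥ₐ D) ∥_b D[u^{b/ȳ}/a]. -/
theorem cross_subject_reduction (Γ : List Formula) (A B : Formula)
    (C : Ctx) (u D : TermCL) (ys : List Nat)
    (hys : ys = (List.range C.depth).filter (fun n => freeInB n u))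
    (hne : ys ≠ [])
    (ha : freeInB C.depth u = false)
    (ht : TypingCL Γ (.parC B (C.fill (.app (.var C.depth) u)) D) A) :
    TypingCL Γ
      (.parC (tupleType (ys.map fun n => C.ext.getD n .bot))
        (.parC B
          ((C.rename (liftF Nat.succ)).fill
            (.app (.var (C.depth + 1)) (tupleTerm (ys.map TermCL.var))))
          (liftU1 D))
        (TermCL.subst 0 (u.msubst (crossσ C.depth ys)) (liftU1 D))) A := by
  cases ht with
  | parC hC hD =>
  set Bp := tupleType (ys.map fun n => C.ext.getD n Formula.bot) with hBp
  have hdlen : C.depth = C.ext.length := rfl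
  have hmem : ∀ n ∈ ys, n < C.depth ∧ freeInB n u = true := by
    intro n hn
    rw [hys] at hn
    simpa [List.mem_filter, List.mem_range] using hn
  have hmem' : ∀ n, n < C.depth → freeInB n u = true → n ∈ ys := by
    intro n h1 h2
    rw [hys]
    simp [List.mem_filter, List.mem_range, h1, h2]
  have hext : ∀ n, n < C.depth → ∀ (Δ : List Formula),
      (C.ext ++ Δ)[n]? = some (C.ext.getD n Formula.bot) := by
    intro n hn Δ
    rw [hdlen] at hn
    rw [List.getElem?_append_left hn, List.getElem?_eq_getElem hn,
      List.getD_eq_getElem _ _ hn]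
  have hdd : ∀ (Δ : List Formula) (X : Formula),
      (C.ext ++ (X :: Δ))[C.depth]? = some X := by
    intro Δ X
    rw [hdlen, List.getElem?_append_right (Nat.le_refl _)]
    simp
  -- typing of u
  obtain ⟨T0, hT0⟩ := fill_inv C hC
  have hu : TypingCL (C.ext ++ (Formula.imp B Formula.bot :: Γ)) u B := by
    cases hT0 with
    | app h1 h2 =>
      cases h1 with
      | var h =>
        rw [hdd] at h
        simp at h
        obtain ⟨rfl, -⟩ := h.1
        exact h2
  -- weakened typing of D
  have hDw : ∀ (X : Formula), TypingCL (B :: X :: Γ) (liftU1 D) A := by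
    intro X
    refine rename_typing hD ?_
    intro n Y hy
    cases n with
    | zero => simpa [liftF] using hy
    | succ n => simpa [liftF] using hy
  refine TypingCL.parC (TypingCL.parC ?_ ?_) ?_
  · -- C[b̄⟨ȳ⟩] part
    refine fill_typing C hC ?_ ?_
    · intro n X hx
      cases n with
      | zero => simpa [liftF] using hx
      | succ n => simpa [liftF] using hx
    · intro T hT
      cases hT with
      | app h1 h2 =>
        cases h1 with
        | var h =>
          rw [hdd] at h
          simp at h
          obtain ⟨rfl, rfl⟩ := h
          refine TypingCL.app (A := Bp) (TypingCL.var ?_) ?_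
          · rw [hdlen, List.getElem?_append_right (by omega)]
            simp
          · exact tuple_typing _ ys hne (fun n hn => hext n (hmem n hn).1 _)
  · -- liftU1 D in B :: ¬Bp :: Γ
    exact hDw _
  · -- the substituted copy of D
    refine subst0_typing (X := B) (hDw Bp) ?_
    refine msubst_typing hu ?_
    intro n X hfree hx
    rcases Nat.lt_trichotomy n C.depth with h | h | h
    · have hy : n ∈ ys := hmem' n h hfree
      have hx' : X = C.ext.getD n Formula.bot := by
        rw [hext n h] at hx
        exact (Option.some.inj hx).symm
      have hi : List.idxOf n ys < ys.length := List.idxOf_lt_length_iff.mpr hy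
      have hv : TypingCL (Bp :: Γ) (TermCL.var 0)
          (tupleType (ys.map fun n => C.ext.getD n Formula.bot)) := by
        exact TypingCL.var (by simp [hBp])
      have hp := projSel_typing (ys.map fun n => C.ext.getD n Formula.bot)
        (List.idxOf n ys) (by simpa using hi) hv
      simp only [crossσ, if_pos h]
      rw [hx']
      simpa [List.getElem_idxOf hi] using hp
    · subst h
      simp [ha] at hfree
    · simp only [crossσ, if_neg (by omega : ¬ n < C.depth)]
      refine TypingCL.var ?_
      rw [hdlen] at h ⊢
      rw [List.getElem?_append_right (by omega)] at hx
      have he : n - C.ext.length = (n - C.ext.length - 1) + 1 := by omega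
      rw [he] at hx ⊢
      simpa using hx
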